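/- For every d ≥ 2 there exist constants p* < 1, a > 0 and c > 0 such that for Bernoulli site percolation on B_d(n) with parameter p > p*, asymptotically almost surely every connected set A of vertices of B_d(n) of size at least c log n contains at least a|A| open sites. -/

import Mathlib

open MeasureTheory Filter
open scoped ENNReal Classical

noncomputable section

/-- Vertices of `ℤ^d`. -/
abbrev Vert (d : ℕ) := Fin d → ℤ

/-- (Oriented) edges of `ℤ^d`: `(v, i)` is the edge from `v` to `v + eᵢ`. -/
abbrev EdgeZ (d : ℕ) := Vert d × Fin d

def unitVec (d : ℕ) (i : Fin d) : Vert d := fun j => if j = i then 1 else 0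

/-- Second endpoint of an edge. -/
def edgeSnd {d : ℕ} (e : EdgeZ d) : Vert d := e.1 + unitVec d e.2

/-- The box `{-n, …, n}^d`. -/
def boxFinset (d n : ℕ) : Finset (Vert d) :=
  Fintype.piFinset fun _ => Finset.Icc (-(n : ℤ)) (n : ℤ)

/-- The edges of the box `B_d(n)`. -/
def boxEdgeFinset (d n : ℕ) : Finset (EdgeZ d) :=
  (boxFinset d n ×ˢ (Finset.univ : Finset (Fin d))).filter fun e => edgeSnd e ∈ boxFinset d n

/-- ℓ¹ distance on `ℤ^d`. -/
def l1dist {d : ℕ} (v w : Vert d) : ℤ := ∑ i, |v i - w i|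

/-- Lattice adjacency: ℓ¹ distance one. -/
def latAdj {d : ℕ} (v w : Vert d) : Prop := l1dist v w = 1

/-- Bernoulli(p) measure on `Bool`. -/
def bern (p : ℝ) : Measure Bool :=
  (PMF.bernoulli (min (Real.toNNReal p) 1) (min_le_right _ _)).toMeasure

instance (p : ℝ) : IsProbabilityMeasure (bern p) := by
  unfold bern; infer_instance

/-- Bernoulli bond percolation on the box `B_d(n)`: the edges of the box are
open independently with probability `p`; edges outside the box are closed. -/
def bondMeasure (d n : ℕ) (p : ℝ) : Measure (EdgeZ d → Bool) :=
  (Measure.pi fun _ : {e // e ∈ boxEdgeFinset d n} => bern p).map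
    fun ω e => if h : e ∈ boxEdgeFinset d n then ω ⟨e, h⟩ else false

/-- Bernoulli site percolation on the box `B_d(n)`. -/
def siteMeasure (d n : ℕ) (p : ℝ) : Measure (Vert d → Bool) :=
  (Measure.pi fun _ : {v // v ∈ boxFinset d n} => bern p).map
    fun η v => if h : v ∈ boxFinset d n then η ⟨v, h⟩ else false

/-- Two vertices joined by an open edge of the box `B_d(n)`. -/
def openAdj (d n : ℕ) (ω : EdgeZ d → Bool) (v w : Vert d) : Prop :=
  ∃ e ∈ boxEdgeFinset d n, ω e = true ∧
    ((e.1 = v ∧ edgeSnd e = w) ∨ (e.1 = w ∧ edgeSnd e = v))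

/-- Connectivity by open edges inside the box. -/
def openConn (d n : ℕ) (ω : EdgeZ d → Bool) : Vert d → Vert d → Prop :=
  Relation.ReflTransGen (openAdj d n ω)

/-- The open cluster of `v` inside the box `B_d(n)`. -/
def cluster (d n : ℕ) (ω : EdgeZ d → Bool) (v : Vert d) : Finset (Vert d) :=
  (boxFinset d n).filter fun w => openConn d n ω v w

/-- Number of open edges with both endpoints in `C`. -/
def openEdgeCount (d n : ℕ) (ω : EdgeZ d → Bool) (C : Finset (Vert d)) : ℕ :=
  ((boxEdgeFinset d n).filter fun e => ω e = true ∧ e.1 ∈ C ∧ edgeSnd e ∈ C).card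

def IsCluster (d n : ℕ) (ω : EdgeZ d → Bool) (C : Finset (Vert d)) : Prop :=
  ∃ v ∈ boxFinset d n, C = cluster d n ω v

/-- `C` is an open cluster of `B_d(n)` with the maximal number of open edges,
i.e. `C = 𝒞_d(n)`. -/
def IsLargestCluster (d n : ℕ) (ω : EdgeZ d → Bool) (C : Finset (Vert d)) : Prop :=
  IsCluster d n ω C ∧
    ∀ C', IsCluster d n ω C' → openEdgeCount d n ω C' ≤ openEdgeCount d n ω C

/-- Number of open edges with one endpoint in `A` and the other in `B`. -/
def openEdgesBetween (d n : ℕ) (ω : EdgeZ d → Bool) (A B : Finset (Vert d)) : ℕ :=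
  ((boxEdgeFinset d n).filter fun e => ω e = true ∧
    ((e.1 ∈ A ∧ edgeSnd e ∈ B) ∨ (e.1 ∈ B ∧ edgeSnd e ∈ A))).card

section WalkDefs

variable {V : Type*} [DecidableEq V]

/-- Degree of `x` in the graph with vertex set `C` and adjacency relation `R`. -/
def rDeg (R : V → V → Prop) (C : Finset V) (x : V) : ℕ := (C.filter fun w => R x w).card

/-- Sum of the degrees (twice the number of edges). -/
def rTotal (R : V → V → Prop) (C : Finset V) : ℕ := ∑ x ∈ C, rDeg R C x

/-- Stationary probability of the set `A` for simple random walk: `π(A) = Σ_{x∈A} deg x / Σ_y deg y`. -/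
def piSet (R : V → V → Prop) (C A : Finset V) : ℝ :=
  (∑ x ∈ A, (rDeg R C x : ℝ)) / (rTotal R C : ℝ)

/-- Stationary probability of a vertex: `π(x) = deg x / Σ_y deg y`. -/
def piVert (R : V → V → Prop) (C : Finset V) (x : V) : ℝ :=
  (rDeg R C x : ℝ) / (rTotal R C : ℝ)

/-- `Q(A,B)`: the number of edges from `A` to `B`, each with weight `1/Σ_y deg y`. -/
def qBetween (R : V → V → Prop) (C A B : Finset V) : ℝ :=
  (∑ a ∈ A, ((B.filter fun b => R a b).card : ℝ)) / (rTotal R C : ℝ)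

/-- Conductance `φ_A = Q(A, Aᶜ) / (π(A) π(Aᶜ))` of a set `A` in the graph `(C, R)`. -/
def conductance (R : V → V → Prop) (C A : Finset V) : ℝ :=
  qBetween R C A (C \ A) / (piSet R C A * piSet R C (C \ A))

/-- The Cheeger constant `φ = inf {φ_A : 0 < π(A) ≤ 1/2}`. -/
def cheeger (R : V → V → Prop) (C : Finset V) : ℝ :=
  sInf {r : ℝ | ∃ A : Finset V, A ⊆ C ∧ 0 < piSet R C A ∧ piSet R C A ≤ 1 / 2 ∧
    r = conductance R C A}

/-- The size-restricted Cheeger constant `φ(x) = min {φ_A : 0 < π(A) ≤ x}`. -/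
def cheegerAt (R : V → V → Prop) (C : Finset V) (x : ℝ) : ℝ :=
  sInf {r : ℝ | ∃ A : Finset V, A ⊆ C ∧ 0 < piSet R C A ∧ piSet R C A ≤ x ∧
    r = conductance R C A}

/-- A finite set `S` is connected for the relation `R` (within `S`). -/
def ConnectedOn (R : V → V → Prop) (S : Finset V) : Prop :=
  S.Nonempty ∧ ∀ v ∈ S, ∀ w ∈ S,
    Relation.ReflTransGen (fun a b => a ∈ S ∧ b ∈ S ∧ R a b) v w

/-- The generator `Q` of continuous-time simple random walk on the graph `(C, R)`:
`Q_{xy} = 1/deg x` if `x ~ y`, `Q_{xx} = -1`, and `0` otherwise. -/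
def walkGen (R : V → V → Prop) (C : Finset V) : Matrix {y // y ∈ C} {y // y ∈ C} ℝ :=
  Matrix.of fun x y =>
    if (x : V) = (y : V) then -1
    else if R (x : V) (y : V) then ((rDeg R C (x : V) : ℝ))⁻¹ else 0

end WalkDefs

/-- The heat kernel `π^t_x(y) = (exp (t Q))_{x y}` of the continuous-time walk. -/
def heatKernel {W : Type*} [Fintype W] [DecidableEq W] (Q : Matrix W W ℝ) (t : ℝ)
    (x y : W) : ℝ :=
  ∑' k : ℕ, (t ^ k / (Nat.factorial k : ℝ)) * (Q ^ k) x y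

/-- Total variation distance between two (densities of) measures on `W`. -/
def tvDist {W : Type*} [Fintype W] (f g : W → ℝ) : ℝ := (∑ x, |f x - g x|) / 2

/-- The total-variation mixing time
`τ₁ = inf {t : sup_{x,y} d_V(π^t_x, π^t_y) ≤ e⁻¹}`. -/
def mixTime {W : Type*} [Fintype W] [DecidableEq W] (Q : Matrix W W ℝ) : ℝ :=
  sInf {t : ℝ | 0 ≤ t ∧
    ∀ x y : W, tvDist (heatKernel Q t x) (heatKernel Q t y) ≤ Real.exp (-1)}

/-- The second eigenvalue `λ₂ < 0` of the generator `Q`. -/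
def lambda2 {W : Type*} [Fintype W] [DecidableEq W] (Q : Matrix W W ℝ) : ℝ :=
  sSup {l : ℝ | l < 0 ∧ Module.End.HasEigenvalue (Matrix.toLin' Q) l}

/-- The relaxation time `τ₂ = -1/λ₂`. -/
def relaxTime {W : Type*} [Fintype W] [DecidableEq W] (Q : Matrix W W ℝ) : ℝ :=
  -(lambda2 Q)⁻¹

/-- Mixing time of the simple random walk on a cluster `C` of bond percolation on `B_d(n)`. -/
def clusterMixTime (d n : ℕ) (ω : EdgeZ d → Bool) (C : Finset (Vert d)) : ℝ :=
  mixTime (walkGen (openAdj d n ω) C)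

/-- The event that the origin is connected to the boundary of the box `B_d(n)` by an
open path (inside the box). -/
def crossEvent (d n : ℕ) : Set (EdgeZ d → Bool) :=
  {ω | ∃ w ∈ boxFinset d n, (∃ i, |w i| = (n : ℤ)) ∧ openConn d n ω 0 w}

/-- `θ(p)`, the probability that the origin percolates: the decreasing limit of the
probabilities of crossing the box `B_d(n)`. -/
def theta (d : ℕ) (p : ℝ) : ℝ≥0∞ := ⨅ n : ℕ, bondMeasure d n p (crossEvent d n)

/-- The critical parameter `p_c(ℤ^d)` for Bernoulli bond percolation. -/
def pc (d : ℕ) : ℝ := sSup {p : ℝ | 0 ≤ p ∧ p ≤ 1 ∧ theta d p = 0}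

/-- `μ` is Bernoulli(p) bond percolation on all of `ℤ^d`: the cylinder events have the
right probabilities. -/
def IsBernoulliPerc (d : ℕ) (p : ℝ) (μ : Measure (EdgeZ d → Bool)) : Prop :=
  IsProbabilityMeasure μ ∧
    ∀ (s : Finset (EdgeZ d)) (f : EdgeZ d → Bool),
      μ {ω | ∀ e ∈ s, ω e = f e} =
        ∏ e ∈ s, (if f e then ENNReal.ofReal p else ENNReal.ofReal (1 - p))

/-- Adjacency by an open edge, anywhere in `ℤ^d`. -/
def fullOpenAdj (d : ℕ) (ω : EdgeZ d → Bool) (v w : Vert d) : Prop :=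
  ∃ e : EdgeZ d, ω e = true ∧ ((e.1 = v ∧ edgeSnd e = w) ∨ (e.1 = w ∧ edgeSnd e = v))

/-- The open cluster of `v` in the full lattice `ℤ^d`. -/
def fullCluster (d : ℕ) (ω : EdgeZ d → Bool) (v : Vert d) : Set (Vert d) :=
  {w | Relation.ReflTransGen (fullOpenAdj d ω) v w}

/-- Connectivity in `B_d(n)` avoiding the edges of `B`. -/
def avoidConn (d n : ℕ) (B : Finset (EdgeZ d)) : Vert d → Vert d → Prop :=
  Relation.ReflTransGen fun a b => ∃ e ∈ boxEdgeFinset d n, e ∉ B ∧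
    ((e.1 = a ∧ edgeSnd e = b) ∨ (e.1 = b ∧ edgeSnd e = a))

/-- `B` is a cutset of edges separating `v` from `w` in `B_d(n)`:
every path from `v` to `w` in `B_d(n)` uses an edge of `B`. -/
def IsCutset (d n : ℕ) (v w : Vert d) (B : Finset (EdgeZ d)) : Prop :=
  B ⊆ boxEdgeFinset d n ∧ ¬ avoidConn d n B v w

/-- A minimal cutset separating `v` from `w`. -/
def IsMinimalCutset (d n : ℕ) (v w : Vert d) (B : Finset (EdgeZ d)) : Prop :=
  IsCutset d n v w B ∧ ∀ B' ⊂ B, ¬ IsCutset d n v w B'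

/-- Adjacency of open sites of site percolation in the box. -/
def siteAdj (d n : ℕ) (η : Vert d → Bool) (a b : Vert d) : Prop :=
  a ∈ boxFinset d n ∧ b ∈ boxFinset d n ∧ η a = true ∧ η b = true ∧ latAdj a b

/-- The open cluster of `v` for site percolation on `B_d(n)`. -/
def siteCluster (d n : ℕ) (η : Vert d → Bool) (v : Vert d) : Finset (Vert d) :=
  (boxFinset d n).filter fun w => Relation.ReflTransGen (siteAdj d n η) v w

/-- Number of lattice edges of the box with both endpoints in `C`. -/
def siteEdgeCount (d n : ℕ) (C : Finset (Vert d)) : ℕ :=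
  ((boxEdgeFinset d n).filter fun e => e.1 ∈ C ∧ edgeSnd e ∈ C).card

def IsSiteCluster (d n : ℕ) (η : Vert d → Bool) (C : Finset (Vert d)) : Prop :=
  ∃ v ∈ boxFinset d n, η v = true ∧ C = siteCluster d n η v

def IsLargestSiteCluster (d n : ℕ) (η : Vert d → Bool) (C : Finset (Vert d)) : Prop :=
  IsSiteCluster d n η C ∧
    ∀ C', IsSiteCluster d n η C' → siteEdgeCount d n C' ≤ siteEdgeCount d n C

/-- The primal edge of `ℤ²` crossing a given edge of the dual lattice `ℤ²_* = ℤ² + (1/2,1/2)`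
(dual vertices are identified with `ℤ²` via `u ↦ u + (1/2,1/2)`). -/
def primalOfDual (f : EdgeZ 2) : EdgeZ 2 :=
  if f.2 = (0 : Fin 2) then (![f.1 0 + 1, f.1 1], 1) else (![f.1 0, f.1 1 + 1], 0)

/-- First-passage weight of the dual edge between the dual vertices `a` and `b`:
`1` if the primal edge crossing it is open, `0` if it is closed. -/
def dualStepWeight (ω : EdgeZ 2 → Bool) (a b : Vert 2) : ℕ :=
  if (∃ i : Fin 2, b = a + unitVec 2 i ∧ ω (primalOfDual (a, i)) = true) ∨
     (∃ i : Fin 2, a = b + unitVec 2 i ∧ ω (primalOfDual (b, i)) = true) then 1 else 0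

/-- Total first-passage cost of a dual lattice path, given as the list of its vertices. -/
def pathCost (ω : EdgeZ 2 → Bool) (l : List (Vert 2)) : ℕ :=
  ((l.zip l.tail).map fun q => dualStepWeight ω q.1 q.2).sum

/-- `l` is a lattice path from `x` to `y`. -/
def IsLatticePath (l : List (Vert 2)) (x y : Vert 2) : Prop :=
  l.Chain' latAdj ∧ l.head? = some x ∧ l.getLast? = some y

/-- First-passage percolation distance on the dual lattice:
`D(x,y) = min { Σᵢ X(eᵢ*) : e₁*,…,e_k* a dual path from x to y }`. -/
def fppDist (ω : EdgeZ 2 → Bool) (x y : Vert 2) : ℕ :=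
  sInf {m : ℕ | ∃ l : List (Vert 2), IsLatticePath l x y ∧ pathCost ω l = m}

end

lemma latAdj_symm {d : ℕ} {v w : Vert d} (h : latAdj v w) : latAdj w v := by
  unfold latAdj l1dist at *
  rw [← h]
  exact Finset.sum_congr rfl fun i _ => abs_sub_comm _ _

lemma latAdj_cases {d : ℕ} {v w : Vert d} (h : latAdj v w) :
    ∃ i, w = v + unitVec d i ∨ v = w + unitVec d i := by
  unfold latAdj l1dist at h
  have hg : ∑ i, ((v i - w i).natAbs) = 1 := by
    have : ((∑ i, ((v i - w i).natAbs) : ℕ) : ℤ) = 1 := by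
      push_cast
      exact h
    exact_mod_cast this
  obtain ⟨i, hi, hunique⟩ : ∃ i ∈ Finset.univ, (v i - w i).natAbs ≠ 0 := by
    by_contra hc
    push_neg at hc
    rw [Finset.sum_eq_zero (fun i hi => by simpa using hc i hi)] at hg
    simp at hg
  have h1 : (v i - w i).natAbs = 1 := by
    by_contra hne
    have h2 : 2 ≤ (v i - w i).natAbs := by omega
    have : 2 ≤ ∑ j, ((v j - w j).natAbs) :=
      le_trans h2 (Finset.single_le_sum (f := fun j => (v j - w j).natAbs) (fun j _ => Nat.zero_le _) (Finset.mem_univ i))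
    omega
  have hrest : ∀ j, j ≠ i → v j = w j := by
    intro j hj
    have : ∑ k ∈ Finset.univ.erase i, ((v k - w k).natAbs) = 0 := by
      have h3 := Finset.add_sum_erase Finset.univ (fun k => (v k - w k).natAbs) (Finset.mem_univ i)
      omega
    have hz := Finset.sum_eq_zero_iff.mp this j (Finset.mem_erase.mpr ⟨hj, Finset.mem_univ j⟩)
    omega
  refine ⟨i, ?_⟩
  rcases Int.natAbs_eq_iff.mp h1 with hpos | hneg
  · -- v i - w i = 1, so v = w + e_i
    right
    funext j
    by_cases hj : j = i
    · subst hj; simp [unitVec]; omega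
    · simp [unitVec, hj]; exact hrest j hj
  · left
    funext j
    by_cases hj : j = i
    · subst hj; simp [unitVec]; omega
    · simp [unitVec, hj]; exact (hrest j hj).symm

noncomputable section
open Classical

def stepApply {d : ℕ} (v : Vert d) (s : Fin d × Bool) : Vert d :=
  if s.2 then v + unitVec d s.1 else v - unitVec d s.1

def stepDir {d : ℕ} [NeZero d] (v w : Vert d) : Fin d × Bool :=
  if h : ∃ i, w = v + unitVec d i then (h.choose, true)
  else if h' : ∃ i, v = w + unitVec d i then (h'.choose, false)
  else default

lemma stepApply_stepDir {d : ℕ} [NeZero d] {v w : Vert d} (h : latAdj v w) :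
    stepApply v (stepDir v w) = w := by
  unfold stepDir
  rcases latAdj_cases h with ⟨i, hi | hi⟩
  · have hex : ∃ i, w = v + unitVec d i := ⟨i, hi⟩
    rw [dif_pos hex]
    simp [stepApply]
    exact hex.choose_spec.symm
  · by_cases hex : ∃ i, w = v + unitVec d i
    · rw [dif_pos hex]
      simp [stepApply]
      exact hex.choose_spec.symm
    · have hex' : ∃ i, v = w + unitVec d i := ⟨i, hi⟩
      rw [dif_neg hex, dif_pos hex']
      simp [stepApply]
      funext j
      have := congrFun hex'.choose_spec j
      simp [Pi.add_apply] at this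
      simp [Pi.sub_apply]
      omega

/-- boundary crossing -/
lemma crossing {V : Type*} {r : V → V → Prop} {S : Set V} {v w : V}
    (h : Relation.ReflTransGen r v w) (hv : v ∈ S) (hw : w ∉ S) :
    ∃ x ∈ S, ∃ y, y ∉ S ∧ r x y := by
  induction h with
  | refl => exact absurd hv hw
  | @tail b c h1 h2 ih =>
    by_cases hb : b ∈ S
    · exact ⟨b, hb, c, hw, h2⟩
    · exact ih hb


lemma grow {d : ℕ} (A : Finset (Vert d)) (hconn : ConnectedOn latAdj A) :
    ∀ (m : ℕ) (S : Finset (Vert d)), S ⊆ A → (A \ S).card = m →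
    ∀ l : List (Vert d), l ≠ [] → l.Chain' latAdj → l.toFinset = S →
      l.length = 2 * S.card - 1 →
    ∃ l' : List (Vert d), l' ≠ [] ∧ l'.Chain' latAdj ∧ l'.toFinset = A ∧
      l'.length = 2 * A.card - 1 := by
  intro m
  induction m with
  | zero =>
    intro S hSA hc l hne hch htf hlen
    have : A = S := by
      apply Finset.Subset.antisymm _ hSA
      intro a ha
      by_contra hna
      have : a ∈ A \ S := Finset.mem_sdiff.mpr ⟨ha, hna⟩
      rw [Finset.card_eq_zero] at hc
      simp [hc] at this
    exact ⟨l, hne, hch, this ▸ htf, this ▸ hlen⟩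
  | succ m ih =>
    intro S hSA hc l hne hch htf hlen
    -- pick w ∈ A \ S
    obtain ⟨w, hw⟩ : (A \ S).Nonempty := Finset.card_pos.mp (by omega)
    obtain ⟨hwA, hwS⟩ := Finset.mem_sdiff.mp hw
    -- pick v ∈ S
    obtain ⟨v, hvS⟩ : S.Nonempty := by
      rcases List.exists_mem_of_ne_nil l hne with ⟨a, ha⟩
      exact ⟨a, htf ▸ List.mem_toFinset.mpr ha⟩
    have hRT := hconn.2 v (hSA hvS) w hwA
    obtain ⟨x, hxS, y, hyS, hy⟩ :=
      crossing (S := {z | z ∈ S}) hRT hvS hwS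
    have hyA : y ∈ A := hy.2.1
    have hxy : latAdj x y := hy.2.2
    have hxl : x ∈ l := List.mem_toFinset.mp (htf ▸ hxS)
    obtain ⟨l1, l2, hl⟩ := List.append_of_mem hxl
    -- new list
    refine ih (insert y S) (Finset.insert_subset hyA hSA) ?_
      (l1 ++ x :: y :: x :: l2) (by simp) ?_ ?_ ?_
    · have : A \ insert y S = (A \ S).erase y := by
        ext a
        simp [Finset.mem_sdiff, Finset.mem_erase, Finset.mem_insert]
        tauto
      rw [this, Finset.card_erase_of_mem (Finset.mem_sdiff.mpr ⟨hyA, hyS⟩), hc]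
      omega
    · rw [hl] at hch
      simp only [List.Chain'] at hch ⊢
      rw [List.isChain_append] at hch ⊢
      refine ⟨hch.1, ?_, ?_⟩
      · rw [List.isChain_cons_cons]
        refine ⟨hxy, ?_⟩
        rw [List.isChain_cons_cons]
        exact ⟨latAdj_symm hxy, hch.2.1⟩
      · intro a ha b hb
        apply hch.2.2 a ha b
        simpa using hb
    · rw [hl] at htf
      simp only [List.toFinset_append, List.toFinset_cons] at htf ⊢
      rw [← htf]
      ext a
      simp only [Finset.mem_insert, Finset.mem_union, List.mem_toFinset, Finset.mem_singleton,
        List.mem_cons]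
      tauto
    · have hyS' : y ∉ S := hyS
      rw [Finset.card_insert_of_notMem hyS']
      rw [hl] at hlen
      simp only [List.length_append, List.length_cons] at hlen ⊢
      have hcard : 1 ≤ S.card := Finset.card_pos.mpr ⟨v, hvS⟩
      omega

lemma exists_cover_walk {d : ℕ} {A : Finset (Vert d)} (hA : ConnectedOn latAdj A) :
    ∃ l : List (Vert d), l ≠ [] ∧ l.Chain' latAdj ∧ l.toFinset = A ∧
      l.length = 2 * A.card - 1 := by
  obtain ⟨v, hv⟩ := hA.1
  refine grow A hA ((A \ {v}).card) {v} (by simpa using hv) rfl [v] (by simp) (List.isChain_singleton v)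
    (by simp) (by simp)

def decodeList {d : ℕ} [NeZero d] : Vert d → ℕ → (ℕ → Fin d × Bool) → List (Vert d)
  | v, 0, _ => [v]
  | v, (j+1), f => v :: decodeList (stepApply v (f 0)) j (fun i => f (i+1))

lemma decode_congr {d : ℕ} [NeZero d] : ∀ (j : ℕ) (v : Vert d) (f g : ℕ → Fin d × Bool),
    (∀ i < j, f i = g i) → decodeList v j f = decodeList v j g := by
  intro j
  induction j with
  | zero => intro v f g _; simp [decodeList]
  | succ j ih =>
    intro v f g hfg
    simp only [decodeList]
    rw [hfg 0 (by omega)]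
    rw [ih _ (fun i => f (i+1)) (fun i => g (i+1)) (fun i hi => hfg (i+1) (by omega))]

lemma decode_spec {d : ℕ} [NeZero d] : ∀ (t : List (Vert d)) (v : Vert d),
    (v :: t).Chain' latAdj →
    decodeList v t.length
      (fun i => stepDir ((v :: t).getD i 0) ((v :: t).getD (i+1) 0)) = v :: t := by
  intro t
  induction t with
  | nil => intro v _; simp [decodeList]
  | cons w t' ih =>
    intro v hch
    simp only [List.Chain'] at hch
    rw [List.isChain_cons_cons] at hch
    simp only [List.length_cons, decodeList]
    congr 1
    have h0 : stepApply v (stepDir ((v :: w :: t').getD 0 0) ((v :: w :: t').getD 1 0)) = w := by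
      simp only [List.getD_cons_zero, List.getD_cons_succ]
      exact stepApply_stepDir hch.1
    rw [h0]
    have hfun : (fun i => stepDir ((v :: w :: t').getD (i+1) 0) ((v :: w :: t').getD (i+2) 0))
        = fun i => stepDir ((w :: t').getD i 0) ((w :: t').getD (i+1) 0) := by
      funext i
      simp [List.getD_cons_succ]
    calc decodeList w t'.length
          (fun i => stepDir ((v :: w :: t').getD (i+1) 0) ((v :: w :: t').getD (i+1+1) 0))
        = decodeList w t'.length
          (fun i => stepDir ((w :: t').getD i 0) ((w :: t').getD (i+1) 0)) := by rw [hfun]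
      _ = w :: t' := ih w hch.2


lemma reconstruct {d : ℕ} [NeZero d] (l : List (Vert d)) (hne : l ≠ [])
    (hch : l.Chain' latAdj) (f : ℕ → Fin d × Bool)
    (hf : ∀ i < l.length - 1, f i = stepDir (l.getD i 0) (l.getD (i+1) 0)) :
    decodeList l.head! (l.length - 1) f = l := by
  obtain ⟨v, t, rfl⟩ := List.exists_cons_of_ne_nil hne
  have hlen : (v :: t).length - 1 = t.length := by simp
  rw [hlen] at hf ⊢
  simp only [List.head!_cons]
  rw [decode_congr t.length v f _ (fun i hi => hf i hi)]
  exact decode_spec t v hch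

lemma conn_count (d n k : ℕ) [NeZero d] (hk : 1 ≤ k) :
    (((boxFinset d n).powerset).filter fun A => ConnectedOn latAdj A ∧ A.card = k).card
      ≤ (boxFinset d n).card * (2 * k * (2 * d) ^ (2 * k)) := by
  classical
  haveI : NeZero (2 * k) := ⟨by omega⟩
  set 𝒜 := ((boxFinset d n).powerset).filter fun A => ConnectedOn latAdj A ∧ A.card = k
    with h𝒜
  set T : Finset (Vert d × (ℕ × (Fin (2*k) → Fin d × Bool))) :=
    boxFinset d n ×ˢ ((Finset.range (2*k)) ×ˢ (Finset.univ)) with hT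
  have hcardT : T.card = (boxFinset d n).card * (2 * k * (2 * d) ^ (2 * k)) := by
    rw [hT, Finset.card_product, Finset.card_product, Finset.card_range, Finset.card_univ,
      Fintype.card_fun, Fintype.card_prod, Fintype.card_fin, Fintype.card_bool,
      Nat.mul_comm d 2, Fintype.card_fin]
  rw [← hcardT]
  set E : Finset (Vert d) → Vert d × (ℕ × (Fin (2*k) → Fin d × Bool)) :=
    fun A => if h : ConnectedOn latAdj A then
      (let l := (exists_cover_walk h).choose
       (l.head!, (l.length - 1, fun i : Fin (2*k) => stepDir (l.getD i 0) (l.getD (i+1) 0))))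
      else default with hE
  apply Finset.card_le_card_of_injOn E
  · intro A hA
    rw [h𝒜, Finset.mem_coe, Finset.mem_filter, Finset.mem_powerset] at hA
    obtain ⟨hsub, hconn, hcard⟩ := hA
    set l := (exists_cover_walk hconn).choose with hldef
    obtain ⟨hne, hch, htf, hlen⟩ := (exists_cover_walk hconn).choose_spec
    rw [hT, Finset.mem_coe, Finset.mem_product]
    constructor
    · simp only [hE, dif_pos hconn]
      apply hsub
      have hm := List.mem_toFinset.mpr (List.head!_mem_self hne)
      rwa [htf] at hm
    · rw [Finset.mem_product]
      constructor
      · simp only [hE, dif_pos hconn, Finset.mem_range]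
        rw [hlen, hcard]
        omega
      · exact Finset.mem_univ _
  · intro A hA B hB hEq
    rw [h𝒜, Finset.mem_coe, Finset.mem_filter, Finset.mem_powerset] at hA hB
    obtain ⟨hsubA, hconnA, hcardA⟩ := hA
    obtain ⟨hsubB, hconnB, hcardB⟩ := hB
    obtain ⟨hneA, hchA, htfA, hlenA⟩ := (exists_cover_walk hconnA).choose_spec
    obtain ⟨hneB, hchB, htfB, hlenB⟩ := (exists_cover_walk hconnB).choose_spec
    set lA := (exists_cover_walk hconnA).choose with hlA
    set lB := (exists_cover_walk hconnB).choose with hlB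
    simp only [hE, dif_pos hconnA, dif_pos hconnB, Prod.mk.injEq] at hEq
    obtain ⟨hhead, hlength, hfun⟩ := hEq
    -- extended step functions
    set f : ℕ → Fin d × Bool := fun i =>
      if h : i < 2 * k then stepDir (lA.getD (⟨i, h⟩ : Fin (2*k)) 0) (lA.getD ((⟨i, h⟩ : Fin (2*k)) + 1) 0)
      else default with hfdef
    have hrecA : decodeList lA.head! (lA.length - 1) f = lA := by
      apply reconstruct lA hneA hchA
      intro i hi
      have hik : i < 2 * k := by rw [hlenA, hcardA] at hi; omega
      simp only [hfdef, dif_pos hik]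
    have hrecB : decodeList lB.head! (lB.length - 1) f = lB := by
      apply reconstruct lB hneB hchB
      intro i hi
      have hik : i < 2 * k := by rw [hlenB, hcardB] at hi; omega
      simp only [hfdef, dif_pos hik]
      have := congrFun hfun (⟨i, hik⟩ : Fin (2*k))
      simp only at this
      rw [this]
    have hlAB : lA = lB := by
      rw [← hrecA, ← hrecB, hhead, hlength]
    rw [← htfA, ← htfB, hlAB]

lemma bern_false {p : ℝ} (hp0 : 0 ≤ p) (hp1 : p ≤ 1) :
    bern p {false} = ENNReal.ofReal (1 - p) := by
  unfold bern
  rw [PMF.toMeasure_apply_singleton _ _ (measurableSet_singleton _)]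
  rw [PMF.bernoulli_apply]
  simp only [cond_false]
  rw [min_eq_left (Real.toNNReal_le_one.mpr hp1)]
  rw [ENNReal.coe_sub, ENNReal.coe_one]
  change 1 - ENNReal.ofReal p = _
  rw [← ENNReal.ofReal_one, ← ENNReal.ofReal_sub _ hp0]

lemma measurable_embed (d n : ℕ) :
    Measurable (fun (η : {v // v ∈ boxFinset d n} → Bool) (v : Vert d) =>
      if h : v ∈ boxFinset d n then η ⟨v, h⟩ else false) := by
  apply measurable_pi_lambda
  intro v
  by_cases h : v ∈ boxFinset d n
  · simp only [dif_pos h]; exact measurable_pi_apply _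
  · simp only [dif_neg h]; exact measurable_const

instance (d n : ℕ) (p : ℝ) : IsProbabilityMeasure (siteMeasure d n p) := by
  unfold siteMeasure
  exact Measure.isProbabilityMeasure_map (measurable_embed d n).aemeasurable

lemma cylinder_measure (d n : ℕ) {p : ℝ} (hp0 : 0 ≤ p) (hp1 : p ≤ 1)
    (S : Finset (Vert d)) (hS : S ⊆ boxFinset d n) :
    siteMeasure d n p {η | ∀ v ∈ S, η v = false} = (ENNReal.ofReal (1 - p)) ^ S.card := by
  unfold siteMeasure
  have hmeas : MeasurableSet {η : Vert d → Bool | ∀ v ∈ S, η v = false} := by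
    have : {η : Vert d → Bool | ∀ v ∈ S, η v = false}
        = ⋂ v ∈ S, {η : Vert d → Bool | η v = false} := by
      ext η; simp
    rw [this]
    refine MeasurableSet.biInter S.countable_toSet fun v _ => ?_
    show MeasurableSet ((fun η : Vert d → Bool => η v) ⁻¹' {false})
    exact measurable_pi_apply v (measurableSet_singleton false)
  rw [Measure.map_apply (measurable_embed d n) hmeas]
  have hpre : (fun (η : {v // v ∈ boxFinset d n} → Bool) (v : Vert d) =>
      if h : v ∈ boxFinset d n then η ⟨v, h⟩ else false) ⁻¹' {η | ∀ v ∈ S, η v = false}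
      = Set.pi Set.univ (fun j : {v // v ∈ boxFinset d n} =>
          if (j : Vert d) ∈ S then {false} else Set.univ) := by
    ext ω
    simp only [Set.mem_preimage, Set.mem_setOf_eq, Set.mem_pi, Set.mem_univ, forall_true_left]
    constructor
    · intro h j
      by_cases hj : (j : Vert d) ∈ S
      · simp only [if_pos hj]
        have := h j hj
        rw [dif_pos j.2] at this
        simpa using this
      · simp [if_neg hj]
    · intro h v hv
      rw [dif_pos (hS hv)]
      have := h ⟨v, hS hv⟩
      simp only [if_pos hv] at this
      simpa using this
  rw [hpre, Measure.pi_pi]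
  have : ∀ j : {v // v ∈ boxFinset d n},
      bern p (if (j : Vert d) ∈ S then {false} else Set.univ)
      = if (j : Vert d) ∈ S then ENNReal.ofReal (1 - p) else 1 := by
    intro j
    by_cases hj : (j : Vert d) ∈ S
    · simp [hj, bern_false hp0 hp1]
    · simp only [if_neg hj]
      exact measure_univ
  rw [Finset.prod_congr rfl (fun j _ => this j)]
  rw [Finset.prod_ite, Finset.prod_const, Finset.prod_const_one, mul_one]
  congr 1
  apply Finset.card_bij (fun (j : {v // v ∈ boxFinset d n}) _ => (j : Vert d))
  · intro a ha
    exact (Finset.mem_filter.mp ha).2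
  · intro a _ b _ hab
    exact Subtype.ext hab
  · intro b hb
    exact ⟨⟨b, hS hb⟩, Finset.mem_filter.mpr ⟨Finset.mem_univ _, hb⟩, rfl⟩

lemma badA_bound (d n : ℕ) {p : ℝ} (hp0 : 0 ≤ p) (hp1 : p ≤ 1)
    (A : Finset (Vert d)) (hA : A ⊆ boxFinset d n) :
    siteMeasure d n p
        {η | ¬ ((1:ℝ)/2 * (A.card : ℝ) ≤ ((A.filter fun v => η v = true).card : ℝ))}
      ≤ 2 ^ A.card * (ENNReal.ofReal (1 - p)) ^ ((A.card + 1)/2) := by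
  set k := A.card with hk
  set t := (k + 1) / 2 with ht
  have hsub : {η : Vert d → Bool |
        ¬ ((1:ℝ)/2 * (A.card : ℝ) ≤ ((A.filter fun v => η v = true).card : ℝ))}
      ⊆ ⋃ S ∈ A.powersetCard t, {η : Vert d → Bool | ∀ v ∈ S, η v = false} := by
    intro η hη
    simp only [Set.mem_setOf_eq, not_le] at hη
    set o := (A.filter fun v => η v = true).card with ho
    have h2o : 2 * o < k := by
      have : (o : ℝ) < (1:ℝ)/2 * (k : ℝ) := hη
      have h2 : (2 * o : ℝ) < (k : ℝ) := by linarith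
      exact_mod_cast h2
    set C := A.filter (fun v => η v = false) with hC
    have hCcard : C.card = k - o := by
      have hsplit : (A.filter fun v => η v = true).card + (A.filter fun v => ¬ (η v = true)).card
          = A.card := Finset.card_filter_add_card_filter_not _
      have : (A.filter fun v => ¬ (η v = true)).card = C.card := by
        congr 1
        apply Finset.filter_congr
        intro v _
        simp [Bool.not_eq_true]
      omega
    have htC : t ≤ C.card := by omega
    obtain ⟨S, hSC, hScard⟩ := Finset.exists_subset_card_eq htC
    simp only [Set.mem_iUnion]
    refine ⟨S, Finset.mem_powersetCard.mpr ⟨hSC.trans (Finset.filter_subset _ _), hScard⟩, ?_⟩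
    intro v hv
    exact (Finset.mem_filter.mp (hSC hv)).2
  calc siteMeasure d n p _ ≤ siteMeasure d n p
        (⋃ S ∈ A.powersetCard t, {η : Vert d → Bool | ∀ v ∈ S, η v = false}) :=
        measure_mono hsub
    _ ≤ ∑ S ∈ A.powersetCard t,
          siteMeasure d n p {η : Vert d → Bool | ∀ v ∈ S, η v = false} :=
        measure_biUnion_finset_le _ _
    _ = ∑ S ∈ A.powersetCard t, (ENNReal.ofReal (1 - p)) ^ t := by
        apply Finset.sum_congr rfl
        intro S hS
        obtain ⟨hSA, hScard⟩ := Finset.mem_powersetCard.mp hS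
        rw [cylinder_measure d n hp0 hp1 S (hSA.trans hA), hScard]
    _ = (A.powersetCard t).card * (ENNReal.ofReal (1 - p)) ^ t := by
        rw [Finset.sum_const, nsmul_eq_mul]
    _ ≤ 2 ^ k * (ENNReal.ofReal (1 - p)) ^ t := by
        apply mul_le_mul_left
        rw [Finset.card_powersetCard]
        have hchoose : k.choose t ≤ 2 ^ k := by
          calc k.choose t ≤ ∑ i ∈ Finset.range (k+1), k.choose i := by
                by_cases htk : t ≤ k
                · exact Finset.single_le_sum (fun i _ => Nat.zero_le _)
                    (Finset.mem_range.mpr (by omega))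
                · rw [Nat.choose_eq_zero_of_lt (by omega)]
                  exact Nat.zero_le _
            _ = 2 ^ k := Nat.sum_range_choose k
        exact_mod_cast Nat.cast_le.mpr hchoose


lemma bad_bound (d n : ℕ) [NeZero d] {p c : ℝ} (hp0 : 0 ≤ p) (hp1 : p ≤ 1)
    (hsmall : (16 * (d:ℝ≥0∞)^2) * ENNReal.ofReal (Real.sqrt (1 - p)) ≤ 1/4) :
    siteMeasure d n p {η | ∃ A : Finset (Vert d), A ⊆ boxFinset d n ∧ ConnectedOn latAdj A ∧
        c * Real.log n ≤ (A.card : ℝ) ∧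
        ¬ ((1:ℝ)/2 * (A.card : ℝ) ≤ ((A.filter fun v => η v = true).card : ℝ))}
      ≤ 4 * ((boxFinset d n).card : ℝ≥0∞) * ENNReal.ofReal ((1/2:ℝ) ^ (c * Real.log n)) := by
  classical
  set N := (boxFinset d n).card with hN
  set σ := ENNReal.ofReal ((1/2:ℝ) ^ (c * Real.log n)) with hσ
  set q := ENNReal.ofReal (1 - p) with hq
  set sq := ENNReal.ofReal (Real.sqrt (1 - p)) with hsq
  set 𝒜 := (boxFinset d n).powerset.filter
    (fun A => ConnectedOn latAdj A ∧ c * Real.log n ≤ (A.card : ℝ)) with h𝒜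
  have hsq1 : sq ≤ 1 := by
    rw [hsq, ← ENNReal.ofReal_one]
    exact ENNReal.ofReal_le_ofReal (Real.sqrt_le_one.mpr (by linarith))
  have hqsq : q = sq ^ 2 := by
    rw [hq, hsq, pow_two, ← ENNReal.ofReal_mul (Real.sqrt_nonneg _),
      Real.mul_self_sqrt (by linarith)]
  -- step 1 : union bound over 𝒜
  have hsub : {η : Vert d → Bool | ∃ A : Finset (Vert d), A ⊆ boxFinset d n ∧
        ConnectedOn latAdj A ∧ c * Real.log n ≤ (A.card : ℝ) ∧
        ¬ ((1:ℝ)/2 * (A.card : ℝ) ≤ ((A.filter fun v => η v = true).card : ℝ))}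
      ⊆ ⋃ A ∈ 𝒜, {η : Vert d → Bool |
          ¬ ((1:ℝ)/2 * (A.card : ℝ) ≤ ((A.filter fun v => η v = true).card : ℝ))} := by
    intro η hη
    obtain ⟨A, hAbox, hAconn, hAlog, hAbad⟩ := hη
    simp only [Set.mem_iUnion]
    exact ⟨A, Finset.mem_filter.mpr ⟨Finset.mem_powerset.mpr hAbox, hAconn, hAlog⟩, hAbad⟩
  refine le_trans (measure_mono hsub) ?_
  refine le_trans (measure_biUnion_finset_le _ _) ?_
  have hstep2 : ∀ A ∈ 𝒜, siteMeasure d n p {η : Vert d → Bool |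
        ¬ ((1:ℝ)/2 * (A.card : ℝ) ≤ ((A.filter fun v => η v = true).card : ℝ))}
      ≤ 2 ^ A.card * q ^ ((A.card + 1)/2) := by
    intro A hA
    rw [h𝒜, Finset.mem_filter, Finset.mem_powerset] at hA
    exact badA_bound d n hp0 hp1 A hA.1
  refine le_trans (Finset.sum_le_sum hstep2) ?_
  -- step 2 : fiberwise by cardinality
  have hmaps : ∀ A ∈ 𝒜, A.card ∈ Finset.range (N + 1) := by
    intro A hA
    rw [h𝒜, Finset.mem_filter, Finset.mem_powerset] at hA
    exact Finset.mem_range.mpr (by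
      have := Finset.card_le_card hA.1
      omega)
  rw [← Finset.sum_fiberwise_of_maps_to hmaps
    (fun A => (2:ℝ≥0∞) ^ A.card * q ^ ((A.card + 1)/2))]
  -- step 3 : per-k bound
  have hperk : ∀ k ∈ Finset.range (N + 1),
      (∑ A ∈ 𝒜.filter (fun A => A.card = k), (2:ℝ≥0∞) ^ A.card * q ^ ((A.card + 1)/2))
      ≤ 2 * (N : ℝ≥0∞) * (σ * (1/2) ^ k) := by
    intro k _
    rcases Finset.eq_empty_or_nonempty (𝒜.filter (fun A => A.card = k)) with hemp | hne
    · rw [hemp, Finset.sum_empty]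
      exact zero_le
    · obtain ⟨A₀, hA₀⟩ := hne
      rw [Finset.mem_filter, h𝒜, Finset.mem_filter, Finset.mem_powerset] at hA₀
      obtain ⟨⟨hA₀box, hA₀conn, hA₀log⟩, hA₀card⟩ := hA₀
      have hk1 : 1 ≤ k := by
        rw [← hA₀card]
        exact Finset.card_pos.mpr hA₀conn.1
      have hklog : c * Real.log n ≤ (k : ℝ) := hA₀card ▸ hA₀log
      -- the sum is count * term
      have hsum : (∑ A ∈ 𝒜.filter (fun A => A.card = k),
            (2:ℝ≥0∞) ^ A.card * q ^ ((A.card + 1)/2))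
          = ((𝒜.filter (fun A => A.card = k)).card : ℝ≥0∞) * (2 ^ k * q ^ ((k + 1)/2)) := by
        rw [Finset.sum_congr rfl (fun A hA => by
          rw [(Finset.mem_filter.mp hA).2]), Finset.sum_const, nsmul_eq_mul]
      rw [hsum]
      -- bound the count
      have hcount : (𝒜.filter (fun A => A.card = k)).card
          ≤ N * (2 * k * (2 * d) ^ (2 * k)) := by
        refine le_trans (Finset.card_le_card ?_) (conn_count d n k hk1)
        intro A hA
        rw [Finset.mem_filter, h𝒜, Finset.mem_filter] at hA
        exact Finset.mem_filter.mpr ⟨hA.1.1, hA.1.2.1, hA.2⟩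
      -- bound the term : q ^ ((k+1)/2) ≤ sq ^ k
      have hterm : q ^ ((k + 1)/2) ≤ sq ^ k := by
        rw [hqsq, ← pow_mul]
        exact pow_le_pow_of_le_one zero_le hsq1 (by omega)
      -- put everything together
      calc ((𝒜.filter (fun A => A.card = k)).card : ℝ≥0∞) * (2 ^ k * q ^ ((k + 1)/2))
          ≤ ((N * (2 * k * (2 * d) ^ (2 * k)) : ℕ) : ℝ≥0∞) * (2 ^ k * sq ^ k) := by
            exact mul_le_mul' (Nat.cast_le.mpr hcount) (mul_le_mul' le_rfl hterm)
        _ = (N : ℝ≥0∞) * ((2 * k : ℕ) : ℝ≥0∞) * ((2 * (d:ℝ≥0∞)) ^ (2 * k)) *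
              (2 ^ k * sq ^ k) := by
            push_cast
            ring
        _ ≤ (N : ℝ≥0∞) * (2 * 2 ^ k) * ((2 * (d:ℝ≥0∞)) ^ (2 * k)) * (2 ^ k * sq ^ k) := by
            have h2k : ((2 * k : ℕ) : ℝ≥0∞) ≤ 2 * 2 ^ k := by
              have hn : (2 * k : ℕ) ≤ 2 * 2 ^ k := by
                have := Nat.lt_two_pow_self (n := k); omega
              calc ((2 * k : ℕ) : ℝ≥0∞) ≤ ((2 * 2 ^ k : ℕ) : ℝ≥0∞) := Nat.cast_le.mpr hn
                _ = 2 * 2 ^ k := by push_cast; ring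
            exact mul_le_mul' (mul_le_mul' (mul_le_mul' le_rfl h2k) le_rfl) le_rfl
        _ = 2 * (N : ℝ≥0∞) * ((16 * (d:ℝ≥0∞)^2) * sq) ^ k := by
            have h16 : ((16 : ℝ≥0∞) * (d:ℝ≥0∞)^2 * sq) ^ k
                = 2 ^ k * 2 ^ k * ((2 * (d:ℝ≥0∞)) ^ 2) ^ k * sq ^ k := by
              rw [show (16 : ℝ≥0∞) * (d:ℝ≥0∞)^2 = 2 * 2 * (2 * (d:ℝ≥0∞)) ^ 2 by ring]
              rw [mul_pow, mul_pow, mul_pow]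
            rw [h16, pow_mul]
            ring
        _ ≤ 2 * (N : ℝ≥0∞) * ((1/4 : ℝ≥0∞)) ^ k := by
            exact mul_le_mul' le_rfl (pow_le_pow_left' hsmall k)
        _ = 2 * (N : ℝ≥0∞) * ((1/2 : ℝ≥0∞) ^ k * (1/2 : ℝ≥0∞) ^ k) := by
            have h14 : (1/4 : ℝ≥0∞) = (1/2) * (1/2) := by
              rw [one_div, one_div, ← ENNReal.mul_inv (by norm_num) (by norm_num)]
              norm_num
            rw [h14, mul_pow]
        _ ≤ 2 * (N : ℝ≥0∞) * (σ * (1/2) ^ k) := by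
            refine mul_le_mul' le_rfl (mul_le_mul' ?_ le_rfl)
            have hhalf : (1/2 : ℝ≥0∞) = ENNReal.ofReal (1/2 : ℝ) := by
              rw [ENNReal.ofReal_div_of_pos] <;> norm_num
            rw [hhalf, ← ENNReal.ofReal_pow (by norm_num), hσ]
            apply ENNReal.ofReal_le_ofReal
            rw [← Real.rpow_natCast (1/2 : ℝ) k]
            exact Real.rpow_le_rpow_of_exponent_ge (by norm_num) (by norm_num) hklog
  refine le_trans (Finset.sum_le_sum hperk) ?_
  rw [← Finset.mul_sum]
  have hgeom : (∑ k ∈ Finset.range (N + 1), σ * (1/2 : ℝ≥0∞) ^ k) ≤ σ * 2 := by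
    rw [← Finset.mul_sum]
    refine mul_le_mul' le_rfl ?_
    refine le_trans (ENNReal.sum_le_tsum _) ?_
    rw [ENNReal.tsum_geometric]
    rw [one_div, ENNReal.one_sub_inv_two]
    simp
  calc 2 * (N : ℝ≥0∞) * (∑ k ∈ Finset.range (N + 1), σ * (1/2 : ℝ≥0∞) ^ k)
      ≤ 2 * (N : ℝ≥0∞) * (σ * 2) := mul_le_mul' le_rfl hgeom
    _ = 4 * (N : ℝ≥0∞) * σ := by ring


lemma box_card (d n : ℕ) : (boxFinset d n).card = (2 * n + 1) ^ d := by
  unfold boxFinset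
  rw [Fintype.card_piFinset]
  have h1 : (Finset.Icc (-(n:ℤ)) (n:ℤ)).card = 2 * n + 1 := by
    rw [Int.card_Icc]
    omega
  simp [h1]

lemma measurable_count {d : ℕ} (A : Finset (Vert d)) :
    Measurable (fun η : Vert d → Bool => ((A.filter fun v => η v = true).card : ℝ)) := by
  have heq : (fun η : Vert d → Bool => ((A.filter fun v => η v = true).card : ℝ))
      = fun η => ∑ v ∈ A, (if η v = true then (1:ℝ) else 0) := by
    funext η
    rw [Finset.sum_boole]
  rw [heq]
  apply Finset.measurable_sum
  intro v _
  have hms : MeasurableSet {η : Vert d → Bool | η v = true} := by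
    show MeasurableSet ((fun η : Vert d → Bool => η v) ⁻¹' {true})
    exact measurable_pi_apply v (measurableSet_singleton true)
  exact Measurable.ite hms measurable_const measurable_const

lemma measurable_bad {d n : ℕ} (c : ℝ) :
    MeasurableSet {η : Vert d → Bool | ∃ A : Finset (Vert d), A ⊆ boxFinset d n ∧
      ConnectedOn latAdj A ∧ c * Real.log n ≤ (A.card : ℝ) ∧
      ¬ ((1:ℝ)/2 * (A.card : ℝ) ≤ ((A.filter fun v => η v = true).card : ℝ))} := by
  have : {η : Vert d → Bool | ∃ A : Finset (Vert d), A ⊆ boxFinset d n ∧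
        ConnectedOn latAdj A ∧ c * Real.log n ≤ (A.card : ℝ) ∧
        ¬ ((1:ℝ)/2 * (A.card : ℝ) ≤ ((A.filter fun v => η v = true).card : ℝ))}
      = ⋃ A : Finset (Vert d), {η : Vert d → Bool | A ⊆ boxFinset d n ∧
        ConnectedOn latAdj A ∧ c * Real.log n ≤ (A.card : ℝ) ∧
        ¬ ((1:ℝ)/2 * (A.card : ℝ) ≤ ((A.filter fun v => η v = true).card : ℝ))} := by
    ext η
    simp only [Set.mem_setOf_eq, Set.mem_iUnion]
  rw [this]
  apply MeasurableSet.iUnion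
  intro A
  by_cases h1 : A ⊆ boxFinset d n ∧ ConnectedOn latAdj A ∧ c * Real.log n ≤ (A.card : ℝ)
  · have : {η : Vert d → Bool | A ⊆ boxFinset d n ∧
        ConnectedOn latAdj A ∧ c * Real.log n ≤ (A.card : ℝ) ∧
        ¬ ((1:ℝ)/2 * (A.card : ℝ) ≤ ((A.filter fun v => η v = true).card : ℝ))}
        = {η : Vert d → Bool |
            ((1:ℝ)/2 * (A.card : ℝ) ≤ ((A.filter fun v => η v = true).card : ℝ))}ᶜ := by
      ext η
      simp only [Set.mem_setOf_eq, Set.mem_compl_iff]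
      tauto
    rw [this]
    apply MeasurableSet.compl
    exact measurableSet_le measurable_const (measurable_count A)
  · have : {η : Vert d → Bool | A ⊆ boxFinset d n ∧
        ConnectedOn latAdj A ∧ c * Real.log n ≤ (A.card : ℝ) ∧
        ¬ ((1:ℝ)/2 * (A.card : ℝ) ≤ ((A.filter fun v => η v = true).card : ℝ))} = ∅ := by
      ext η
      simp only [Set.mem_setOf_eq, Set.mem_empty_iff_false, iff_false]
      tauto
    rw [this]
    exact MeasurableSet.empty

end

/-- For `d ≥ 2` there are `p* < 1`, `a > 0`, `c > 0` such that for site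
percolation with parameter `p > p*`, a.a.s. every connected set `A` of vertices of `B_d(n)`
with `|A| ≥ c log n` contains at least `a |A|` open sites. -/
theorem connected_sets_open_sites (d : ℕ) (hd : 2 ≤ d) :
    ∃ pstar a c : ℝ, pstar < 1 ∧ 0 < a ∧ 0 < c ∧
      ∀ p : ℝ, pstar < p → p ≤ 1 →
        Tendsto (fun n : ℕ => siteMeasure d n p
            {η | ∀ A : Finset (Vert d), A ⊆ boxFinset d n → ConnectedOn latAdj A →
              c * Real.log n ≤ (A.card : ℝ) →
              a * (A.card : ℝ) ≤ ((A.filter fun v => η v = true).card : ℝ)})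
          atTop (nhds 1) := by
  haveI : NeZero d := ⟨by omega⟩
  have hd2 : (2:ℝ) ≤ (d:ℝ) := by exact_mod_cast hd
  have hdpos : (0:ℝ) < (d:ℝ) := by linarith
  set x : ℝ := (1 / (64 * (d:ℝ)^2))^2 with hx
  have hxpos : 0 < x := by positivity
  have hxsmall : x < 1/2 := by
    have h64 : (256:ℝ) ≤ 64 * (d:ℝ)^2 := by nlinarith
    have : (1 / (64 * (d:ℝ)^2)) ≤ 1/256 := by
      rw [div_le_div_iff₀ (by linarith) (by norm_num)]
      linarith
    have h0 : 0 ≤ (1 / (64 * (d:ℝ)^2)) := by positivity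
    nlinarith
  refine ⟨1 - x, 1/2, ((d:ℝ)+2)/Real.log 2, by linarith, by norm_num,
    by positivity, ?_⟩
  intro p hp hp1
  set c : ℝ := ((d:ℝ)+2)/Real.log 2 with hc
  have hp0 : 0 ≤ p := by linarith
  have h1p : 1 - p < x := by linarith
  have h1p0 : 0 ≤ 1 - p := by linarith
  -- hsmall
  have hsqrt : Real.sqrt (1 - p) ≤ 1 / (64 * (d:ℝ)^2) := by
    have := Real.sqrt_le_sqrt h1p.le
    rwa [hx, Real.sqrt_sq (by positivity)] at this
  have hsmall : (16 * (d:ℝ≥0∞)^2) * ENNReal.ofReal (Real.sqrt (1 - p)) ≤ 1/4 := by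
    have hcast : (16 * (d:ℝ≥0∞)^2) = ENNReal.ofReal (16 * (d:ℝ)^2) := by
      rw [ENNReal.ofReal_mul (by norm_num), ENNReal.ofReal_pow (by positivity)]
      simp [ENNReal.ofReal_ofNat]
    rw [hcast, ← ENNReal.ofReal_mul (by positivity)]
    have h14 : ENNReal.ofReal (1/4 : ℝ) = (1/4 : ℝ≥0∞) := by
      rw [ENNReal.ofReal_div_of_pos] <;> norm_num
    rw [← h14]
    apply ENNReal.ofReal_le_ofReal
    have : 16 * (d:ℝ)^2 * Real.sqrt (1 - p) ≤ 16 * (d:ℝ)^2 * (1 / (64 * (d:ℝ)^2)) := by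
      apply mul_le_mul_of_nonneg_left hsqrt (by positivity)
    refine le_trans this ?_
    rw [mul_one_div, div_le_div_iff₀ (by positivity) (by norm_num)]
    nlinarith
  -- the bad sets
  set Bad : ℕ → Set (Vert d → Bool) := fun n =>
    {η : Vert d → Bool | ∃ A : Finset (Vert d), A ⊆ boxFinset d n ∧
      ConnectedOn latAdj A ∧ c * Real.log n ≤ (A.card : ℝ) ∧
      ¬ ((1:ℝ)/2 * (A.card : ℝ) ≤ ((A.filter fun v => η v = true).card : ℝ))} with hBad
  have hcompl : ∀ n : ℕ, {η : Vert d → Bool |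
        ∀ A : Finset (Vert d), A ⊆ boxFinset d n → ConnectedOn latAdj A →
          c * Real.log n ≤ (A.card : ℝ) →
          1/2 * (A.card : ℝ) ≤ ((A.filter fun v => η v = true).card : ℝ)}
      = (Bad n)ᶜ := by
    intro n
    ext η
    simp only [hBad, Set.mem_compl_iff, Set.mem_setOf_eq, not_exists]
    push_neg
    constructor
    · intro h A hA1 hA2 hA3
      exact h A hA1 hA2 hA3
    · intro h A hA1 hA2 hA3
      exact h A hA1 hA2 hA3
  -- the real upper bound sequence
  set r : ℕ → ℝ := fun n => 4 * ((2*n+1)^d : ℝ) * (1/2:ℝ)^(c * Real.log n) with hr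
  have hboundN : ∀ n : ℕ, siteMeasure d n p (Bad n) ≤ ENNReal.ofReal (r n) := by
    intro n
    refine le_trans (bad_bound d n hp0 hp1 hsmall) (le_of_eq ?_)
    rw [box_card]
    rw [hr]
    rw [ENNReal.ofReal_mul (by positivity), ENNReal.ofReal_mul (by norm_num)]
    have h4 : ENNReal.ofReal (4:ℝ) = 4 := by
      simp [ENNReal.ofReal_ofNat]
    have hcast : ENNReal.ofReal ((2*n+1:ℝ)^d) = (((2*n+1)^d : ℕ) : ℝ≥0∞) := by
      rw [show ((2*n+1:ℝ))^d = (((2*n+1)^d : ℕ) : ℝ) by push_cast; ring]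
      rw [ENNReal.ofReal_natCast]
    rw [h4, hcast]
  have hrzero : Tendsto r atTop (nhds 0) := by
    have hg : Tendsto (fun n : ℕ => 4 * (3:ℝ)^d / (n:ℝ)) atTop (nhds 0) :=
      tendsto_const_div_atTop_nhds_zero_nat _
    apply squeeze_zero' (Filter.Eventually.of_forall fun n => by positivity) _ hg
    filter_upwards [Filter.eventually_ge_atTop 1] with n hn
    have hn0 : (0:ℝ) < (n:ℝ) := by exact_mod_cast Nat.lt_of_lt_of_le Nat.zero_lt_one hn
    have hn1 : (1:ℝ) ≤ (n:ℝ) := by exact_mod_cast hn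
    -- identify the rpow factor
    have hlog2 : Real.log 2 ≠ 0 := ne_of_gt (Real.log_pos (by norm_num))
    have hkey : (1/2:ℝ)^(c * Real.log n) = (((n:ℝ)^(d+2)))⁻¹ := by
      rw [Real.rpow_def_of_pos (by norm_num : (0:ℝ) < 1/2)]
      have hl : Real.log (1/2:ℝ) = -Real.log 2 := by
        rw [one_div, Real.log_inv]
      rw [hl, hc]
      have harg : -Real.log 2 * (((d:ℝ)+2)/Real.log 2 * Real.log n)
          = -(Real.log n * (((d:ℝ)+2))) := by
        field_simp
      rw [harg, Real.exp_neg]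
      congr 1
      rw [← Real.rpow_def_of_pos hn0]
      rw [show ((d:ℝ)+2) = ((d+2 : ℕ) : ℝ) by push_cast; ring]
      rw [Real.rpow_natCast]
    rw [hr]
    simp only
    rw [hkey]
    have hsplit : ((n:ℝ)^(d+2)) = (n:ℝ)^d * (n:ℝ)^2 := by
      rw [pow_add]
    calc 4 * ((2*(n:ℝ)+1)^d) * (((n:ℝ)^(d+2)))⁻¹
        ≤ 4 * ((3*(n:ℝ))^d) * (((n:ℝ)^(d+2)))⁻¹ := by
          gcongr
          linarith
      _ = 4 * (3:ℝ)^d / (n:ℝ)^2 := by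
          rw [hsplit, mul_pow]
          field_simp
      _ ≤ 4 * (3:ℝ)^d / (n:ℝ) := by
          apply div_le_div_of_nonneg_left (by positivity) hn0
          nlinarith
  have hb : Tendsto (fun n : ℕ => ENNReal.ofReal (r n)) atTop (nhds 0) := by
    have := (ENNReal.continuous_ofReal.tendsto 0).comp hrzero
    simpa [Function.comp_def] using this
  have hBadTendsto : Tendsto (fun n : ℕ => siteMeasure d n p (Bad n)) atTop (nhds 0) :=
    tendsto_of_tendsto_of_tendsto_of_le_of_le tendsto_const_nhds hb
      (fun n => zero_le) hboundN
  simp only [hcompl]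
  have hco : (fun n : ℕ => siteMeasure d n p ((Bad n)ᶜ))
      = fun n : ℕ => 1 - siteMeasure d n p (Bad n) :=
    funext fun n => prob_compl_eq_one_sub (measurable_bad c)
  rw [hco]
  have hfin := ENNReal.Tendsto.sub (tendsto_const_nhds : Tendsto (fun _ : ℕ => (1:ℝ≥0∞)) atTop (nhds 1))
    hBadTendsto (Or.inl ENNReal.one_ne_top)
  simpa using hfin
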